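/- Let N ≥ 2, let σ be a proper divisor of N, and let i with 1 ≤ i ≤ N − 1 satisfy gcd(i,N) = σ. Then |Σ_{k=1}^{N−1} k·({ik/N} − {(N−i)k/N})| ≤ (1/6)(N/σ − 1)(N − 2σ), i.e. the maximum of this quantity over all such i is attained at i = σ (equivalently at i = N − σ). -/

import Mathlib

open Finset

private lemma gauss_q (n : ℕ) : ∑ r ∈ range n, (r : ℚ) = n * (n - 1) / 2 := by
  induction n with
  | zero => simp
  | succ n ih => rw [sum_range_succ, ih]; push_cast; ring

private lemma sumsq_q (n : ℕ) : ∑ r ∈ range n, (r : ℚ) ^ 2 = n * (n - 1) * (2 * n - 1) / 6 := by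
  induction n with
  | zero => simp
  | succ n ih => rw [sum_range_succ, ih]; push_cast; ring

private lemma sum_range_mul_eq (f : ℕ → ℚ) (s m : ℕ) :
    ∑ k ∈ range (s * m), f k = ∑ q ∈ range s, ∑ r ∈ range m, f (q * m + r) := by
  induction s with
  | zero => simp
  | succ s ih => rw [Nat.succ_mul, Finset.sum_range_add, ih, sum_range_succ]

private lemma range_eq_Icc_sum (n : ℕ) (hn : 0 < n) (h : ℕ → ℚ) (h0 : h 0 = 0) :
    ∑ k ∈ range n, h k = ∑ k ∈ Icc 1 (n - 1), h k := by
  have h : Icc 1 (n - 1) = Ico 1 n := by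
    rw [← Finset.Ico_add_one_right_eq_Icc]
    congr 1
    omega
  rw [h, range_eq_Ico, Finset.sum_eq_sum_Ico_succ_bot hn, h0, zero_add]

private lemma mod_inv_cancel {a b m : ℕ} (hab : a * b % m = 1) {r : ℕ} (hr : r < m) :
    a * (b * r % m) % m = r := by
  conv_lhs => rw [Nat.mul_mod, Nat.mod_mod_of_dvd _ dvd_rfl, ← Nat.mul_mod, ← mul_assoc,
    Nat.mul_mod, hab, one_mul, Nat.mod_mod_of_dvd _ dvd_rfl, Nat.mod_eq_of_lt hr]

private lemma mod_ne_zero {a m : ℕ} (hco : Nat.Coprime a m) {r : ℕ} (h1 : 1 ≤ r)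
    (h2 : r < m) : a * r % m ≠ 0 := by
  intro h0
  have hd : m ∣ a * r := Nat.dvd_of_mod_eq_zero h0
  have : m ∣ r := (Nat.Coprime.symm hco).dvd_of_dvd_mul_left hd
  have := Nat.le_of_dvd (by omega) this
  omega

private lemma sum_mod_perm {a m : ℕ} (hm : 2 ≤ m) (hco : Nat.Coprime a m) (h : ℕ → ℚ) :
    ∑ r ∈ Icc 1 (m - 1), h (a * r % m) = ∑ r ∈ Icc 1 (m - 1), h r := by
  obtain ⟨b, -, hb⟩ := Nat.exists_mul_mod_eq_one_of_coprime hco (by omega)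
  have hba : b * a % m = 1 := by rwa [mul_comm] at hb
  have hcob : Nat.Coprime b m := by
    have hab : Nat.Coprime (a * b) m := by
      unfold Nat.Coprime
      rw [Nat.gcd_comm, Nat.gcd_rec, hb, Nat.gcd_one_left]
    exact Nat.Coprime.coprime_dvd_left ⟨a, mul_comm a b⟩ hab
  refine Finset.sum_nbij' (i := fun r => a * r % m) (j := fun r => b * r % m) ?_ ?_ ?_ ?_ ?_
  · intro r hr
    rw [mem_Icc] at hr
    show a * r % m ∈ Icc 1 (m - 1)
    rw [mem_Icc]
    have h1 := mod_ne_zero hco hr.1 (by omega : r < m)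
    have h2 := Nat.mod_lt (a * r) (show 0 < m by omega)
    omega
  · intro r hr
    rw [mem_Icc] at hr
    show b * r % m ∈ Icc 1 (m - 1)
    rw [mem_Icc]
    have h1 := mod_ne_zero hcob hr.1 (by omega : r < m)
    have h2 := Nat.mod_lt (b * r) (show 0 < m by omega)
    omega
  · intro r hr
    rw [mem_Icc] at hr
    show b * (a * r % m) % m = r
    exact mod_inv_cancel hba (by omega : r < m)
  · intro r hr
    rw [mem_Icc] at hr
    show a * (b * r % m) % m = r
    exact mod_inv_cancel hb (by omega : r < m)
  · intro r _
    rfl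

private lemma sum_reflect (m : ℕ) (hm : 1 ≤ m) :
    ∑ r ∈ Icc 1 (m - 1), ((m : ℚ) - r) ^ 2 = ∑ r ∈ Icc 1 (m - 1), (r : ℚ) ^ 2 := by
  refine Finset.sum_nbij' (i := fun r => m - r) (j := fun r => m - r) ?_ ?_ ?_ ?_ ?_
  · intro r hr; rw [mem_Icc] at hr; show m - r ∈ Icc 1 (m - 1); rw [mem_Icc]; omega
  · intro r hr; rw [mem_Icc] at hr; show m - r ∈ Icc 1 (m - 1); rw [mem_Icc]; omega
  · intro r hr; rw [mem_Icc] at hr; show m - (m - r) = r; omega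
  · intro r hr; rw [mem_Icc] at hr; show m - (m - r) = r; omega
  · intro r hr
    rw [mem_Icc] at hr
    show ((m : ℚ) - r) ^ 2 = ((m - r : ℕ) : ℚ) ^ 2
    rw [Nat.cast_sub (by omega : r ≤ m)]

set_option maxHeartbeats 2000000 in
/-- For `N ≥ 2`, a proper divisor `σ` of `N`, and `1 ≤ i ≤ N−1` with
`gcd(i,N) = σ`, `|Σ_{k=1}^{N−1} k·({ik/N} − {(N−i)k/N})| ≤ (1/6)(N/σ − 1)(N − 2σ)`. -/
theorem abs_sum_fract_diff_le (N s i : ℕ) (hN : 2 ≤ N) (hdvd : s ∣ N) (hne : s ≠ N)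
    (hi1 : 1 ≤ i) (hi2 : i ≤ N - 1) (hgcd : Nat.gcd i N = s) :
    |∑ k ∈ Finset.Icc 1 (N - 1), (k : ℚ) *
        (Int.fract ((i : ℚ) * (k : ℚ) / (N : ℚ))
          - Int.fract (((N : ℚ) - (i : ℚ)) * (k : ℚ) / (N : ℚ)))|
      ≤ 1 / 6 * ((N : ℚ) / (s : ℚ) - 1) * ((N : ℚ) - 2 * (s : ℚ)) := by
  have hs1 : 1 ≤ s := Nat.pos_of_dvd_of_pos hdvd (by omega)
  obtain ⟨m, hN'⟩ := hdvd
  have hm2 : 2 ≤ m := by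
    have h1 : m ≠ 0 := by rintro rfl; omega
    have h2 : m ≠ 1 := by rintro rfl; omega
    omega
  have hsi : s ∣ i := hgcd ▸ Nat.gcd_dvd_left i N
  obtain ⟨a, hia⟩ := hsi
  have ha1 : 1 ≤ a := by
    have : a ≠ 0 := by rintro rfl; omega
    omega
  have hiN : i < N := by omega
  have ham : a < m := by
    have h := hiN
    rw [hia, hN'] at h
    exact lt_of_mul_lt_mul_left h (Nat.zero_le s)
  have hco : Nat.Coprime a m := by
    have h1 : Nat.gcd (s * a) (s * m) = s * Nat.gcd a m := Nat.gcd_mul_left s a m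
    rw [← hia, ← hN', hgcd] at h1
    have h2 : s * 1 = s * Nat.gcd a m := by omega
    exact (Nat.eq_of_mul_eq_mul_left hs1 h2).symm
  have hs0 : (0 : ℚ) < s := by exact_mod_cast hs1
  have hm0 : (0 : ℚ) < m := by exact_mod_cast (show 0 < m by omega)
  have hN0 : (0 : ℚ) < N := by exact_mod_cast (show 0 < N by omega)
  have hNq : (N : ℚ) = s * m := by exact_mod_cast hN'
  have hiq : (i : ℚ) = s * a := by exact_mod_cast hia
  -- fract of i*r/N
  have key_fract_i : ∀ r : ℕ, Int.fract ((i : ℚ) * r / N) = ((a * r % m : ℕ) : ℚ) / m := by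
    intro r
    have e : (i : ℚ) * r / N = ((a * r : ℕ) : ℚ) / ((m : ℕ) : ℚ) := by
      push_cast
      rw [hiq, hNq]
      field_simp
    rw [e, Int.fract_div_natCast_eq_div_natCast_mod]
  have key_ne : ∀ r : ℕ, 1 ≤ r → r ≤ m - 1 → ((a * r % m : ℕ) : ℚ) ≠ 0 := by
    intro r h1 h2
    have := mod_ne_zero hco h1 (by omega : r < m)
    exact_mod_cast this
  have key_fract_Ni : ∀ r : ℕ, 1 ≤ r → r ≤ m - 1 →
      Int.fract (((N : ℚ) - i) * r / N) = 1 - ((a * r % m : ℕ) : ℚ) / m := by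
    intro r h1 h2
    have e : ((N : ℚ) - i) * r / N = ((r : ℤ) : ℚ) + -((i : ℚ) * r / N) := by
      push_cast
      field_simp
      ring
    rw [e, Int.fract_intCast_add, Int.fract_neg, key_fract_i]
    rw [key_fract_i]
    exact div_ne_zero (key_ne r h1 h2) (ne_of_gt hm0)
  have key_c : ∀ r : ℕ, 1 ≤ r → r ≤ m - 1 →
      Int.fract ((i : ℚ) * r / N) - Int.fract (((N : ℚ) - i) * r / N)
        = (2 * ((a * r % m : ℕ) : ℚ) - m) / m := by
    intro r h1 h2
    rw [key_fract_i, key_fract_Ni r h1 h2]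
    field_simp
    ring
  -- step 1 : regroup
  have key_shift : ∀ q r : ℕ,
      ((q * m + r : ℕ) : ℚ) * (Int.fract ((i : ℚ) * ((q * m + r : ℕ) : ℚ) / N)
          - Int.fract (((N : ℚ) - i) * ((q * m + r : ℕ) : ℚ) / N))
        = ((q * m + r : ℕ) : ℚ) * (Int.fract ((i : ℚ) * r / N)
          - Int.fract (((N : ℚ) - i) * r / N)) := by
    intro q r
    have e1 : Int.fract ((i : ℚ) * ((q * m + r : ℕ) : ℚ) / N) = Int.fract ((i : ℚ) * r / N) := by
      refine Int.fract_eq_fract.mpr ⟨(a * q : ℤ), ?_⟩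
      push_cast
      rw [hiq, hNq]
      field_simp
      ring
    have e2 : Int.fract (((N : ℚ) - i) * ((q * m + r : ℕ) : ℚ) / N)
        = Int.fract (((N : ℚ) - i) * r / N) := by
      refine Int.fract_eq_fract.mpr ⟨((m : ℤ) - a) * q, ?_⟩
      push_cast
      rw [hiq, hNq]
      field_simp
      ring
    rw [e1, e2]
  have step1 : ∑ k ∈ Finset.Icc 1 (N - 1), (k : ℚ) *
        (Int.fract ((i : ℚ) * (k : ℚ) / (N : ℚ))
          - Int.fract (((N : ℚ) - (i : ℚ)) * (k : ℚ) / (N : ℚ)))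
      = ∑ q ∈ range s, ∑ r ∈ range m, ((q * m + r : ℕ) : ℚ)
          * (Int.fract ((i : ℚ) * r / N) - Int.fract (((N : ℚ) - i) * r / N)) := by
    have h01 := range_eq_Icc_sum N (by omega) (fun k : ℕ => (k : ℚ) *
        (Int.fract ((i : ℚ) * (k : ℚ) / (N : ℚ))
          - Int.fract (((N : ℚ) - (i : ℚ)) * (k : ℚ) / (N : ℚ)))) (by norm_num)
    have hrange : range N = range (s * m) := by rw [hN']
    rw [← h01, hrange, sum_range_mul_eq]
    refine sum_congr rfl fun q _ => sum_congr rfl fun r _ => ?_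
    exact key_shift q r
  have step2 : ∑ q ∈ range s, ∑ r ∈ range m, ((q * m + r : ℕ) : ℚ)
          * (Int.fract ((i : ℚ) * r / N) - Int.fract (((N : ℚ) - i) * r / N))
      = ∑ r ∈ range m, ((m : ℚ) * (s * (s - 1) / 2) + s * r)
          * (Int.fract ((i : ℚ) * r / N) - Int.fract (((N : ℚ) - i) * r / N)) := by
    rw [Finset.sum_comm]
    refine sum_congr rfl fun r _ => ?_
    rw [← Finset.sum_mul]
    congr 1
    have : ∀ q : ℕ, ((q * m + r : ℕ) : ℚ) = (q : ℚ) * m + r := by intro q; push_cast; ring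
    rw [sum_congr rfl fun q _ => this q, Finset.sum_add_distrib, ← Finset.sum_mul, gauss_q,
      Finset.sum_const, card_range, nsmul_eq_mul]
    ring
  have step3 : ∑ r ∈ range m, ((m : ℚ) * (s * (s - 1) / 2) + s * r)
          * (Int.fract ((i : ℚ) * r / N) - Int.fract (((N : ℚ) - i) * r / N))
      = ∑ r ∈ Icc 1 (m - 1), ((m : ℚ) * (s * (s - 1) / 2) + s * r)
          * (Int.fract ((i : ℚ) * r / N) - Int.fract (((N : ℚ) - i) * r / N)) := by
    refine range_eq_Icc_sum m (by omega) _ ?_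
    simp
  -- the permuted sums
  have hsum_c1 : ∑ r ∈ Icc 1 (m - 1), ((a * r % m : ℕ) : ℚ) = m * ((m : ℚ) - 1) / 2 := by
    rw [sum_mod_perm hm2 hco (fun x => (x : ℚ))]
    rw [← range_eq_Icc_sum m (by omega) (fun x => (x : ℚ)) (by norm_num), gauss_q]
  have hsum_r : ∑ r ∈ Icc 1 (m - 1), (r : ℚ) = m * ((m : ℚ) - 1) / 2 := by
    rw [← range_eq_Icc_sum m (by omega) (fun x => (x : ℚ)) (by norm_num), gauss_q]
  have hQ : ∑ r ∈ Icc 1 (m - 1), (r : ℚ) ^ 2 = m * ((m : ℚ) - 1) * (2 * m - 1) / 6 := by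
    rw [← range_eq_Icc_sum m (by omega) (fun x => (x : ℚ) ^ 2) (by norm_num), sumsq_q]
  have hsum_f2 : ∑ r ∈ Icc 1 (m - 1), ((a * r % m : ℕ) : ℚ) ^ 2
      = m * ((m : ℚ) - 1) * (2 * m - 1) / 6 := by
    rw [sum_mod_perm hm2 hco (fun x => (x : ℚ) ^ 2), hQ]
  have hsum_mf2 : ∑ r ∈ Icc 1 (m - 1), ((m : ℚ) - ((a * r % m : ℕ) : ℚ)) ^ 2
      = m * ((m : ℚ) - 1) * (2 * m - 1) / 6 := by
    rw [sum_mod_perm hm2 hco (fun x => ((m : ℚ) - (x : ℚ)) ^ 2), sum_reflect m (by omega), hQ]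
  have hcard : ((Icc 1 (m - 1)).card : ℚ) = (m : ℚ) - 1 := by
    rw [Nat.card_Icc]
    have : m - 1 + 1 - 1 = m - 1 := by omega
    rw [this, Nat.cast_sub (by omega : 1 ≤ m)]
    norm_num
  set A : ℚ := ∑ r ∈ Icc 1 (m - 1), (r : ℚ) * ((a * r % m : ℕ) : ℚ) with hA
  have step4 : ∑ r ∈ Icc 1 (m - 1), ((m : ℚ) * (s * (s - 1) / 2) + s * r)
          * (Int.fract ((i : ℚ) * r / N) - Int.fract (((N : ℚ) - i) * r / N))
      = (2 * s / m) * A - s * m * ((m : ℚ) - 1) / 2 := by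
    have e : ∀ r ∈ Icc 1 (m - 1), ((m : ℚ) * (s * (s - 1) / 2) + s * r)
          * (Int.fract ((i : ℚ) * r / N) - Int.fract (((N : ℚ) - i) * r / N))
        = (s * ((s : ℚ) - 1)) * ((a * r % m : ℕ) : ℚ)
          + (2 * s / m) * ((r : ℚ) * ((a * r % m : ℕ) : ℚ))
          - ((m : ℚ) * (s * (s - 1) / 2) + s * (r : ℚ)) := by
      intro r hr
      rw [mem_Icc] at hr
      rw [key_c r hr.1 hr.2]
      field_simp
    rw [sum_congr rfl e, Finset.sum_sub_distrib, Finset.sum_add_distrib, ← Finset.mul_sum,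
      ← Finset.mul_sum, Finset.sum_add_distrib, Finset.sum_const, nsmul_eq_mul,
      ← Finset.mul_sum, hsum_c1, hsum_r, ← hA, hcard]
    field_simp
    ring
  -- bounds for A
  have hub : A ≤ m * ((m : ℚ) - 1) * (2 * m - 1) / 6 := by
    have h1 : ∀ r ∈ Icc 1 (m - 1), 2 * ((r : ℚ) * ((a * r % m : ℕ) : ℚ))
        ≤ (r : ℚ) ^ 2 + ((a * r % m : ℕ) : ℚ) ^ 2 := by
      intro r _
      nlinarith [sq_nonneg ((r : ℚ) - ((a * r % m : ℕ) : ℚ))]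
    have h2 : 2 * A ≤ ∑ r ∈ Icc 1 (m - 1), ((r : ℚ) ^ 2 + ((a * r % m : ℕ) : ℚ) ^ 2) := by
      rw [hA, Finset.mul_sum]
      exact Finset.sum_le_sum h1
    rw [Finset.sum_add_distrib, hQ, hsum_f2] at h2
    linarith
  have hlb : (m : ℚ) * (m * ((m : ℚ) - 1) / 2) - m * ((m : ℚ) - 1) * (2 * m - 1) / 6 ≤ A := by
    have h1 : ∀ r ∈ Icc 1 (m - 1), 2 * ((r : ℚ) * ((m : ℚ) - ((a * r % m : ℕ) : ℚ)))
        ≤ (r : ℚ) ^ 2 + ((m : ℚ) - ((a * r % m : ℕ) : ℚ)) ^ 2 := by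
      intro r _
      nlinarith [sq_nonneg ((r : ℚ) - ((m : ℚ) - ((a * r % m : ℕ) : ℚ)))]
    have h2 : 2 * ((m : ℚ) * (m * ((m : ℚ) - 1) / 2) - A)
        ≤ ∑ r ∈ Icc 1 (m - 1), ((r : ℚ) ^ 2 + ((m : ℚ) - ((a * r % m : ℕ) : ℚ)) ^ 2) := by
      have e : ∑ r ∈ Icc 1 (m - 1), (r : ℚ) * ((m : ℚ) - ((a * r % m : ℕ) : ℚ))
          = (m : ℚ) * (m * ((m : ℚ) - 1) / 2) - A := by
        have : ∀ r ∈ Icc 1 (m - 1), (r : ℚ) * ((m : ℚ) - ((a * r % m : ℕ) : ℚ))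
            = (m : ℚ) * (r : ℚ) - (r : ℚ) * ((a * r % m : ℕ) : ℚ) := by
          intro r _; ring
        rw [sum_congr rfl this, Finset.sum_sub_distrib, ← Finset.mul_sum, hsum_r, ← hA]
      rw [← e, Finset.mul_sum]
      exact Finset.sum_le_sum h1
    rw [Finset.sum_add_distrib, hQ, hsum_mf2] at h2
    linarith
  -- assemble
  have hT : ∑ k ∈ Finset.Icc 1 (N - 1), (k : ℚ) *
        (Int.fract ((i : ℚ) * (k : ℚ) / (N : ℚ))
          - Int.fract (((N : ℚ) - (i : ℚ)) * (k : ℚ) / (N : ℚ)))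
      = (2 * s / m) * A - s * m * ((m : ℚ) - 1) / 2 := by
    rw [step1, step2, step3, step4]
  have hrhs : 1 / 6 * ((N : ℚ) / s - 1) * ((N : ℚ) - 2 * s)
      = s * ((m : ℚ) - 1) * ((m : ℚ) - 2) / 6 := by
    rw [hNq]
    field_simp
  rw [hT, hrhs, abs_le]
  constructor
  · have heq : (2 * s / m) * ((m : ℚ) * (m * ((m : ℚ) - 1) / 2)
        - m * ((m : ℚ) - 1) * (2 * m - 1) / 6) - s * m * ((m : ℚ) - 1) / 2
        = -(s * ((m : ℚ) - 1) * ((m : ℚ) - 2) / 6) := by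
      field_simp
      ring
    have hmul := mul_le_mul_of_nonneg_left hlb (by positivity : (0 : ℚ) ≤ 2 * s / m)
    linarith
  · have heq : (2 * s / m) * (m * ((m : ℚ) - 1) * (2 * m - 1) / 6)
        - s * m * ((m : ℚ) - 1) / 2 = s * ((m : ℚ) - 1) * ((m : ℚ) - 2) / 6 := by
      field_simp
      ring
    have hmul := mul_le_mul_of_nonneg_left hub (by positivity : (0 : ℚ) ≤ 2 * s / m)
    linarith
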